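/- Fix n ≥ 2 and α ∈ ℂ, and set a = n+1+α, b = n−1−α, c = n−1+α, d = n+1−α, and f(z) = (a z^n + b)/(c z^n + d). Then ad − bc = 4n, f(1) = 1 and f′(1) = 1, so f has a parabolic fixed point of multiplier 1 at z = 1; and the invariant of f is X = bc/(ad − bc) = ((n−1)² − α²)/(4n), so that every complex value of X is realized by this family. Moreover, if α ∉ {0, n+1, −(n−1)}, the two critical values satisfy f(0) = b/d = 1 + 2/(α w₁) and f(∞) = a/c = 1 + 2/(α w₂), where w₁ = 1 − (n+1)/α and w₂ = 1 + (n−1)/α. (The normal form (12) of §4, parametrizing the curve Per₁(1) of conjugacy classes with a parabolic fixed point of multiplier 1.) -/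

import Mathlib

/-- The normal form (12) of §4 parametrizing `Per₁(1)`: with
`a = n+1+α`, `b = n-1-α`, `c = n-1+α`, `d = n+1-α` and
`f(z) = (a zⁿ + b)/(c zⁿ + d)`, one has `ad - bc = 4n`, `f(1) = 1` and
`f'(1) = 1` (a parabolic fixed point of multiplier `1`), the invariant is
`X = bc/(ad - bc) = ((n-1)² - α²)/(4n)`, every complex value of `X` is
realized by this family, and for `α ∉ {0, n+1, -(n-1)}` the critical values
are `f(0) = b/d = 1 + 2/(α w₁)` and `f(∞) = a/c = 1 + 2/(α w₂)` with
`w₁ = 1 - (n+1)/α` and `w₂ = 1 + (n-1)/α`. -/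
theorem stmt19 (n : ℕ) (hn : 2 ≤ n) (α : ℂ) :
    let a : ℂ := (n : ℂ) + 1 + α
    let b : ℂ := (n : ℂ) - 1 - α
    let c : ℂ := (n : ℂ) - 1 + α
    let d : ℂ := (n : ℂ) + 1 - α
    let f : ℂ → ℂ := fun z => (a * z ^ n + b) / (c * z ^ n + d)
    a * d - b * c = 4 * (n : ℂ) ∧ f 1 = 1 ∧ deriv f 1 = 1 ∧
      b * c / (a * d - b * c) = (((n : ℂ) - 1) ^ 2 - α ^ 2) / (4 * (n : ℂ)) ∧
      (∀ X : ℂ, ∃ β : ℂ, (((n : ℂ) - 1) ^ 2 - β ^ 2) / (4 * (n : ℂ)) = X) ∧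
      (α ≠ 0 → α ≠ (n : ℂ) + 1 → α ≠ -((n : ℂ) - 1) →
        f 0 = b / d ∧
        b / d = 1 + 2 / (α * (1 - ((n : ℂ) + 1) / α)) ∧
        a / c = 1 + 2 / (α * (1 + ((n : ℂ) - 1) / α))) := by
  intro a b c d f
  have hn0 : (n : ℂ) ≠ 0 := Nat.cast_ne_zero.mpr (by omega)
  have hcd : c * (1 : ℂ) ^ n + d ≠ 0 := by
    simp only [one_pow, mul_one]
    show c + d ≠ 0
    have : c + d = 2 * (n : ℂ) := by simp only [c, d]; ring
    rw [this]
    simp [hn0]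
  have h4n : (4 : ℂ) * (n : ℂ) ≠ 0 := by simp [hn0]
  refine ⟨by simp only [a, b, c, d]; ring, ?_, ?_, ?_, ?_, ?_⟩
  · show (a * 1 ^ n + b) / (c * 1 ^ n + d) = 1
    rw [div_eq_one_iff_eq hcd]
    simp only [a, b, c, d, one_pow]; ring
  · have h1 : HasDerivAt (fun z : ℂ => a * z ^ n + b)
        (a * ((n : ℂ) * (1 : ℂ) ^ (n - 1))) 1 :=
      ((hasDerivAt_pow n 1).const_mul a).add_const b
    have h2 : HasDerivAt (fun z : ℂ => c * z ^ n + d)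
        (c * ((n : ℂ) * (1 : ℂ) ^ (n - 1))) 1 :=
      ((hasDerivAt_pow n 1).const_mul c).add_const d
    have h := (h1.div h2 hcd).deriv
    change deriv ((fun z : ℂ => a * z ^ n + b) / fun z => c * z ^ n + d) 1 = 1
    rw [h]
    simp only [one_pow, mul_one, add_zero]
    have hcd' : c + d ≠ 0 := by simpa using hcd
    field_simp
    simp only [a, b, c, d]
    ring
  · rw [show a * d - b * c = 4 * (n : ℂ) by simp only [a, b, c, d]; ring]
    congr 1
    simp only [a, b, c, d]; ring
  · intro X
    obtain ⟨β, hβ⟩ := IsAlgClosed.exists_pow_nat_eq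
      (((n : ℂ) - 1) ^ 2 - 4 * (n : ℂ) * X) two_pos
    exact ⟨β, by rw [hβ]; field_simp; ring⟩
  · intro h0 h1 h2
    have hd : d ≠ 0 := by
      simp only [d]
      intro h
      apply h1
      have : α = (n : ℂ) + 1 := by linear_combination -h
      exact this
    have hc : c ≠ 0 := by
      simp only [c]
      intro h
      exact h2 (by linear_combination h)
    refine ⟨?_, ?_, ?_⟩
    · show (a * 0 ^ n + b) / (c * 0 ^ n + d) = b / d
      rw [zero_pow (by omega)]
      ring_nf
    · have hw : α * (1 - ((n : ℂ) + 1) / α) = α - ((n : ℂ) + 1) := by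
        field_simp
      rw [hw]
      have hne : α - ((n : ℂ) + 1) ≠ 0 := sub_ne_zero.mpr h1
      rw [div_eq_iff hd]
      field_simp
      simp only [b, d]
      ring
    · have hw : α * (1 + ((n : ℂ) - 1) / α) = α + ((n : ℂ) - 1) := by
        field_simp
      rw [hw]
      have hne : α + ((n : ℂ) - 1) ≠ 0 := by
        intro h
        exact h2 (by linear_combination h)
      rw [div_eq_iff hc]
      field_simp
      simp only [a, c]
      ring
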